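/- Let μ be a probability measure on ℝ with compact and infinite support, let n ≥ 1, and let p be a nonzero polynomial of degree n satisfying ∫ p q dμ = 0 for every polynomial q of degree less than n. If c < d are real numbers with μ([c, d]) = 0, then p has at most one zero in the interval [c, d]. -/
import Mathlib


open MeasureTheory Polynomial

/-- An orthogonal polynomial of degree `n ≥ 1` for a probability measure `μ` on `ℝ`
with compact infinite support has at most one zero in any interval `[c, d]` of
`μ`-measure zero. -/
theorem orthogonal_polynomial_at_most_one_zero_in_gap
    (μ : Measure ℝ) [IsProbabilityMeasure μ]
    (hcompact : ∃ K : Set ℝ, IsCompact K ∧ μ Kᶜ = 0)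
    (hinfinite : ∀ S : Finset ℝ, μ ((S : Set ℝ)ᶜ) ≠ 0)
    (n : ℕ) (hn : 1 ≤ n) (p : Polynomial ℝ) (hp : p ≠ 0) (hdeg : p.natDegree = n)
    (horth : ∀ q : Polynomial ℝ, q.degree < n → ∫ x, p.eval x * q.eval x ∂μ = 0)
    (c d : ℝ) (hcd : c < d) (hμcd : μ (Set.Icc c d) = 0) :
    ∀ y ∈ Set.Icc c d, ∀ z ∈ Set.Icc c d, p.eval y = 0 → p.eval z = 0 → y = z := by
  intro y hy z hz hpy hpz
  by_contra hne
  set a := min y z with ha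
  set b := max y z with hb
  have hab : a < b := min_lt_max.mpr hne
  have hpa : p.eval a = 0 := by
    rcases min_choice y z with h | h <;> rw [ha, h] <;> assumption
  have hpb : p.eval b = 0 := by
    rcases max_choice y z with h | h <;> rw [hb, h] <;> assumption
  have hacd : a ∈ Set.Icc c d := by
    rcases min_choice y z with h | h <;> rw [ha, h] <;> assumption
  have hbcd : b ∈ Set.Icc c d := by
    rcases max_choice y z with h | h <;> rw [hb, h] <;> assumption
  -- factor p
  obtain ⟨p1, hp1⟩ := (dvd_iff_isRoot).mpr hpa
  have hp1b : p1.eval b = 0 := by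
    have h := hpb
    rw [hp1] at h
    simp only [eval_mul, eval_sub, eval_X, eval_C] at h
    rcases mul_eq_zero.mp h with h' | h'
    · exact absurd h' (sub_ne_zero.mpr hab.ne')
    · exact h'
  obtain ⟨q, hq⟩ := (dvd_iff_isRoot).mpr hp1b
  have hpfact : p = (X - C a) * ((X - C b) * q) := by rw [hp1, hq]
  have hq0 : q ≠ 0 := by
    intro h
    apply hp
    rw [hpfact, h, mul_zero, mul_zero]
  -- degree of q
  have hXa : (X - C a : Polynomial ℝ) ≠ 0 := X_sub_C_ne_zero a
  have hXb : (X - C b : Polynomial ℝ) ≠ 0 := X_sub_C_ne_zero b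
  have hndeg : p.natDegree = 2 + q.natDegree := by
    rw [hpfact, natDegree_mul hXa (mul_ne_zero hXb hq0), natDegree_mul hXb hq0,
      natDegree_X_sub_C, natDegree_X_sub_C]
    ring
  have hqdeg : q.degree < (n : WithBot ℕ) := by
    rw [← natDegree_lt_iff_degree_lt hq0]
    omega
  have hint0 : ∫ x, p.eval x * q.eval x ∂μ = 0 := horth q hqdeg
  -- pointwise formula
  have heval : ∀ x : ℝ, p.eval x * q.eval x = (x - a) * (x - b) * (q.eval x) ^ 2 := by
    intro x
    conv_lhs => rw [hpfact]
    simp only [eval_mul, eval_sub, eval_X, eval_C]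
    ring
  -- a.e. nonneg
  have hsub : {x : ℝ | ¬ 0 ≤ p.eval x * q.eval x} ⊆ Set.Icc c d := by
    intro x hx
    simp only [Set.mem_setOf_eq, not_le] at hx
    by_contra hxcd
    have hx' : x < c ∨ d < x := by
      simp only [Set.mem_Icc, not_and_or, not_le] at hxcd
      tauto
    have : 0 ≤ p.eval x * q.eval x := by
      rw [heval]
      rcases hx' with h | h
      · have h1 : x < a := lt_of_lt_of_le h hacd.1
        have h2 : x < b := lt_of_lt_of_le h hbcd.1
        exact mul_nonneg (mul_nonneg_of_nonpos_of_nonpos (by linarith) (by linarith)) (sq_nonneg _)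
      · have h1 : a < x := lt_of_le_of_lt hacd.2 h
        have h2 : b < x := lt_of_le_of_lt hbcd.2 h
        exact mul_nonneg (mul_nonneg (by linarith) (by linarith)) (sq_nonneg _)
    linarith
  have hnonneg : 0 ≤ᵐ[μ] fun x => p.eval x * q.eval x := by
    have : μ {x : ℝ | ¬ 0 ≤ p.eval x * q.eval x} = 0 :=
      measure_mono_null hsub hμcd
    exact ae_iff.mpr this
  -- integrability
  obtain ⟨K, hK, hKc⟩ := hcompact
  have hcont : Continuous fun x : ℝ => p.eval x * q.eval x := by
    exact (p.continuous_aeval).mul (q.continuous_aeval)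
  obtain ⟨Cb, hCb⟩ := hK.exists_bound_of_continuousOn hcont.continuousOn
  have hint : Integrable (fun x => p.eval x * q.eval x) μ := by
    refine Integrable.mono' (integrable_const Cb) hcont.aestronglyMeasurable ?_
    refine ae_iff.mpr (measure_mono_null ?_ hKc)
    intro x hx
    simp only [Set.mem_setOf_eq, not_le] at hx
    intro hxK
    exact absurd (hCb x hxK) (not_le.mpr hx)
  -- conclude a.e. zero
  have hae : (fun x => p.eval x * q.eval x) =ᵐ[μ] 0 :=
    (integral_eq_zero_iff_of_nonneg_ae hnonneg hint).mp hint0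
  have hpq : p * q ≠ 0 := mul_ne_zero hp hq0
  apply hinfinite (p * q).roots.toFinset
  refine measure_mono_null ?_ (ae_iff.mp hae)
  intro x hx
  simp only [Set.mem_compl_iff, Finset.coe_sort_coe, Finset.mem_coe,
    Multiset.mem_toFinset, mem_roots hpq, IsRoot.def] at hx
  simp only [Set.mem_setOf_eq, Pi.zero_apply]
  rw [← eval_mul] at *
  exact hx
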